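/- Monotonicity of quantum likelihood-test error probabilities: define α(a) = Tr(ρ {ρ − e^{a}σ ≤ 0}) and β(a) = Tr(σ {ρ − e^{a}σ > 0}) for a density operator ρ and positive semidefinite σ. Then for all a < b, α(a) ≤ α(b) and β(a) ≥ β(b). -/

import Mathlib

open scoped ComplexOrder

/-- The spectral projection of a matrix onto the direct sum of its eigenspaces
corresponding to strictly positive eigenvalues (defined to be `0` if the matrix
is not Hermitian). -/
noncomputable def posProj {m : Type*} [Fintype m] [DecidableEq m]
    (A : Matrix m m ℂ) : Matrix m m ℂ :=
  if hA : A.IsHermitian then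
    (hA.eigenvectorUnitary : Matrix m m ℂ) *
      Matrix.diagonal (fun i => if 0 < hA.eigenvalues i then (1 : ℂ) else 0) *
      star (hA.eigenvectorUnitary : Matrix m m ℂ)
  else 0

/-- The spectral projection onto the eigenspaces of nonpositive eigenvalues. -/
noncomputable def nonposProj {m : Type*} [Fintype m] [DecidableEq m]
    (A : Matrix m m ℂ) : Matrix m m ℂ :=
  if hA : A.IsHermitian then
    (hA.eigenvectorUnitary : Matrix m m ℂ) *
      Matrix.diagonal (fun i => if hA.eigenvalues i ≤ 0 then (1 : ℂ) else 0) *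
      star (hA.eigenvectorUnitary : Matrix m m ℂ)
  else 0


section Aux
open Matrix
variable {m : Type*} [Fintype m] [DecidableEq m]

lemma trace_re_nonneg {A : Matrix m m ℂ} (hA : A.PosSemidef) : 0 ≤ A.trace.re := by
  have h : ∀ i, 0 ≤ (A i i).re := by
    intro i
    simpa using (Complex.le_def.mp (hA.diag_nonneg (i := i))).1
  simpa [Matrix.trace, Matrix.diag, Complex.re_sum] using Finset.sum_nonneg (fun i _ => h i)

open scoped MatrixOrder in
lemma trace_mul_re_nonneg {A B : Matrix m m ℂ} (hA : A.PosSemidef) (hB : B.PosSemidef) :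
    0 ≤ (A * B).trace.re := by
  have h1 : A * B = CFC.sqrt A * (CFC.sqrt A * B) := by
    rw [← mul_assoc, CFC.sqrt_mul_sqrt_self A (Matrix.nonneg_iff_posSemidef.mpr hA)]
  have h2 : (A * B).trace = (CFC.sqrt A * B * CFC.sqrt A).trace := by
    rw [h1, Matrix.trace_mul_cycle, mul_assoc]
  have h3 : (CFC.sqrt A * B * CFC.sqrt A).PosSemidef := by
    have := hB.mul_mul_conjTranspose_same (CFC.sqrt A)
    rwa [(Matrix.nonneg_iff_posSemidef.mp (CFC.sqrt_nonneg A)).isHermitian.eq] at this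
  rw [h2]; exact trace_re_nonneg h3

lemma conj_psd {X : Matrix m m ℂ} (hX : X.IsHermitian) (f : m → ℂ) (hf : ∀ i, 0 ≤ f i) :
    ((hX.eigenvectorUnitary : Matrix m m ℂ) * Matrix.diagonal f *
      star (hX.eigenvectorUnitary : Matrix m m ℂ)).PosSemidef := by
  have := (Matrix.posSemidef_diagonal_iff.mpr hf).mul_mul_conjTranspose_same
    (hX.eigenvectorUnitary : Matrix m m ℂ)
  rwa [← Matrix.star_eq_conjTranspose] at this

lemma conj_mul_conj (U : Matrix m m ℂ) (hU : star U * U = 1) (f g : m → ℂ) :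
    (U * Matrix.diagonal f * star U) * (U * Matrix.diagonal g * star U) =
      U * Matrix.diagonal (fun i => f i * g i) * star U := by
  have h : Matrix.diagonal f * Matrix.diagonal g = Matrix.diagonal (fun i => f i * g i) :=
    Matrix.diagonal_mul_diagonal f g
  calc (U * Matrix.diagonal f * star U) * (U * Matrix.diagonal g * star U)
      = U * (Matrix.diagonal f * ((star U * U) * (Matrix.diagonal g * star U))) := by
        simp only [mul_assoc]
    _ = U * ((Matrix.diagonal f * Matrix.diagonal g) * star U) := by
        rw [hU, one_mul]; simp only [mul_assoc]
    _ = U * Matrix.diagonal (fun i => f i * g i) * star U := by rw [h, mul_assoc]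

lemma mul_conj {X : Matrix m m ℂ} (hX : X.IsHermitian) (f : m → ℂ) :
    X * ((hX.eigenvectorUnitary : Matrix m m ℂ) * Matrix.diagonal f *
        star (hX.eigenvectorUnitary : Matrix m m ℂ)) =
      (hX.eigenvectorUnitary : Matrix m m ℂ) *
        Matrix.diagonal (fun i => (hX.eigenvalues i : ℂ) * f i) *
        star (hX.eigenvectorUnitary : Matrix m m ℂ) := by
  have h2 := congrArg (fun Y => Y * ((hX.eigenvectorUnitary : Matrix m m ℂ) *
      Matrix.diagonal f * star (hX.eigenvectorUnitary : Matrix m m ℂ)))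
    hX.spectral_theorem
  simp only [Unitary.conjStarAlgAut_apply, Unitary.coe_star] at h2
  rw [h2, conj_mul_conj _ (Matrix.mem_unitaryGroup_iff'.mp hX.eigenvectorUnitary.2)]
  rfl

lemma conj_sum {X : Matrix m m ℂ} (hX : X.IsHermitian) (f g : m → ℂ) :
    (hX.eigenvectorUnitary : Matrix m m ℂ) * Matrix.diagonal f *
        star (hX.eigenvectorUnitary : Matrix m m ℂ) +
      (hX.eigenvectorUnitary : Matrix m m ℂ) * Matrix.diagonal g *
        star (hX.eigenvectorUnitary : Matrix m m ℂ) =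
      (hX.eigenvectorUnitary : Matrix m m ℂ) * Matrix.diagonal (f + g) *
        star (hX.eigenvectorUnitary : Matrix m m ℂ) := by
  have h : Matrix.diagonal (f + g) = Matrix.diagonal f + Matrix.diagonal g :=
    (Matrix.diagonal_add f g).symm
  rw [h, mul_add, add_mul]

lemma posProj_add_nonposProj {X : Matrix m m ℂ} (hX : X.IsHermitian) :
    posProj X + nonposProj X = 1 := by
  rw [posProj, nonposProj, dif_pos hX, dif_pos hX, conj_sum hX]
  have h : (fun i => if 0 < hX.eigenvalues i then (1:ℂ) else 0) +
      (fun i => if hX.eigenvalues i ≤ 0 then (1:ℂ) else 0) = fun _ => 1 := by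
    funext i
    by_cases h : 0 < hX.eigenvalues i
    · simp [h, not_le.mpr h]
    · simp [h, le_of_not_gt h]
  rw [h, Matrix.diagonal_one, mul_one,
    Matrix.mem_unitaryGroup_iff.mp hX.eigenvectorUnitary.2]

lemma posProj_posSemidef {X : Matrix m m ℂ} (hX : X.IsHermitian) :
    (posProj X).PosSemidef := by
  rw [posProj, dif_pos hX]
  exact conj_psd hX _ (fun i => by split <;> simp)

lemma nonposProj_posSemidef {X : Matrix m m ℂ} (hX : X.IsHermitian) :
    (nonposProj X).PosSemidef := by
  rw [nonposProj, dif_pos hX]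
  exact conj_psd hX _ (fun i => by split <;> simp)

lemma nonposProj_eq_one_sub {X : Matrix m m ℂ} (hX : X.IsHermitian) :
    nonposProj X = 1 - posProj X := by
  have h := posProj_add_nonposProj hX
  linear_combination (norm := module) h

lemma trace_mul_le_posProj {X : Matrix m m ℂ} (hX : X.IsHermitian) {T : Matrix m m ℂ}
    (hT : T.PosSemidef) (hT1 : (1 - T).PosSemidef) :
    (X * T).trace.re ≤ (X * posProj X).trace.re := by
  set Xp := X * posProj X with hXpdef
  set Xq := X * nonposProj X with hXqdef
  have hXp : Xp = (hX.eigenvectorUnitary : Matrix m m ℂ) *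
      Matrix.diagonal (fun i => (hX.eigenvalues i : ℂ) *
        (if 0 < hX.eigenvalues i then 1 else 0)) *
      star (hX.eigenvectorUnitary : Matrix m m ℂ) := by
    rw [hXpdef, posProj, dif_pos hX]; exact mul_conj hX _
  have hXq : Xq = (hX.eigenvectorUnitary : Matrix m m ℂ) *
      Matrix.diagonal (fun i => (hX.eigenvalues i : ℂ) *
        (if hX.eigenvalues i ≤ 0 then 1 else 0)) *
      star (hX.eigenvectorUnitary : Matrix m m ℂ) := by
    rw [hXqdef, nonposProj, dif_pos hX]; exact mul_conj hX _
  have hXpPSD : Xp.PosSemidef := by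
    rw [hXp]
    refine conj_psd hX _ (fun i => ?_)
    by_cases h : 0 < hX.eigenvalues i
    · simp only [h, if_pos, mul_one]
      exact Complex.zero_le_real.mpr h.le
    · simp [h]
  have hXmPSD : (-Xq).PosSemidef := by
    have hneg : -Xq = (hX.eigenvectorUnitary : Matrix m m ℂ) *
        Matrix.diagonal (fun i => -((hX.eigenvalues i : ℂ) *
          (if hX.eigenvalues i ≤ 0 then 1 else 0))) *
        star (hX.eigenvectorUnitary : Matrix m m ℂ) := by
      rw [hXq, ← Matrix.diagonal_neg, Matrix.mul_neg, Matrix.neg_mul]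
    rw [hneg]
    refine conj_psd hX _ (fun i => ?_)
    by_cases h : hX.eigenvalues i ≤ 0
    · simp only [h, if_pos, mul_one]
      rw [show -((hX.eigenvalues i : ℂ)) = ((-hX.eigenvalues i : ℝ) : ℂ) by push_cast; ring]
      exact Complex.zero_le_real.mpr (by linarith)
    · simp [h]
  have hX1 : Xp + Xq = X := by
    rw [hXpdef, hXqdef, ← mul_add, posProj_add_nonposProj hX, mul_one]
  have hid : Xp * (1 - T) + (-Xq) * T = Xp - X * T := by
    calc Xp * (1 - T) + (-Xq) * T = Xp - (Xp + Xq) * T := by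
          rw [mul_sub, mul_one, add_mul, neg_mul]; abel
      _ = Xp - X * T := by rw [hX1]
  have h0 : 0 ≤ (Xp - X * T).trace.re := by
    rw [← hid, Matrix.trace_add, Complex.add_re]
    exact add_nonneg (trace_mul_re_nonneg hXpPSD hT1) (trace_mul_re_nonneg hXmPSD hT)
  rw [Matrix.trace_sub, Complex.sub_re] at h0
  linarith

lemma hermitian_sub_smul {σ ρ : Matrix m m ℂ} (hρ : ρ.IsHermitian) (hσ : σ.IsHermitian)
    (c : ℝ) : (ρ - (c : ℂ) • σ).IsHermitian := by
  refine hρ.sub ?_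
  show ((c : ℂ) • σ)ᴴ = (c : ℂ) • σ
  rw [Matrix.conjTranspose_smul, hσ.eq, Complex.star_def, Complex.conj_ofReal]

lemma expand_trace (ρ σ : Matrix m m ℂ) (c : ℝ) (P : Matrix m m ℂ) :
    ((ρ - (c : ℂ) • σ) * P).trace.re = (ρ * P).trace.re - c * (σ * P).trace.re := by
  rw [sub_mul, Matrix.smul_mul, Matrix.trace_sub, Matrix.trace_smul, Complex.sub_re]
  simp [Complex.smul_re]

end Aux

/-- Monotonicity: `α(a) = Tr(ρ {ρ − e^a σ ≤ 0})` is nondecreasing and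
`β(a) = Tr(σ {ρ − e^a σ > 0})` is nonincreasing in `a`. -/
theorem alpha_mono_beta_antimono {m : Type*} [Fintype m] [DecidableEq m]
    (ρ σ : Matrix m m ℂ) (hρ : ρ.PosSemidef) (hρ1 : ρ.trace = 1)
    (hσ : σ.PosSemidef) (a b : ℝ) (hab : a < b) :
    (ρ * nonposProj (ρ - (Real.exp a : ℂ) • σ)).trace.re ≤
        (ρ * nonposProj (ρ - (Real.exp b : ℂ) • σ)).trace.re ∧
      (σ * posProj (ρ - (Real.exp b : ℂ) • σ)).trace.re ≤
        (σ * posProj (ρ - (Real.exp a : ℂ) • σ)).trace.re := by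
  set ea := Real.exp a with hea
  set eb := Real.exp b with heb
  have hea0 : 0 < ea := Real.exp_pos a
  have heab : ea < eb := Real.exp_lt_exp.mpr hab
  set A := ρ - (ea : ℂ) • σ with hA
  set B := ρ - (eb : ℂ) • σ with hB
  have hAh : A.IsHermitian := hermitian_sub_smul hρ.1 hσ.1 ea
  have hBh : B.IsHermitian := hermitian_sub_smul hρ.1 hσ.1 eb
  -- the tests
  have hPA := posProj_posSemidef hAh
  have hPB := posProj_posSemidef hBh
  have hQA : (1 - posProj A).PosSemidef := by
    rw [← nonposProj_eq_one_sub hAh]; exact nonposProj_posSemidef hAh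
  have hQB : (1 - posProj B).PosSemidef := by
    rw [← nonposProj_eq_one_sub hBh]; exact nonposProj_posSemidef hBh
  set rA := (ρ * posProj A).trace.re
  set rB := (ρ * posProj B).trace.re
  set sA := (σ * posProj A).trace.re
  set sB := (σ * posProj B).trace.re
  -- Neyman-Pearson inequalities
  have h1 : rB - ea * sB ≤ rA - ea * sA := by
    have := trace_mul_le_posProj hAh hPB hQB
    rwa [hA, expand_trace, expand_trace] at this
  have h2 : rA - eb * sA ≤ rB - eb * sB := by
    have := trace_mul_le_posProj hBh hPA hQA
    rwa [hB, expand_trace, expand_trace] at this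
  have hs : sB ≤ sA := by nlinarith
  have hr : rB ≤ rA := by nlinarith [mul_nonneg hea0.le (sub_nonneg.mpr hs)]
  refine ⟨?_, hs⟩
  have htr : ρ.trace.re = 1 := by rw [hρ1]; rfl
  have hconv : ∀ (X : Matrix m m ℂ) (hX : X.IsHermitian),
      (ρ * nonposProj X).trace.re = 1 - (ρ * posProj X).trace.re := by
    intro X hX
    rw [nonposProj_eq_one_sub hX, mul_sub, mul_one, Matrix.trace_sub, Complex.sub_re, htr]
  rw [hconv A hAh, hconv B hBh]
  linarith
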